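/- For any associative algebra A over F, a ∈ A, positive integer i, and x ∈ A: (S_i ∘ S'_i)(x) + ((bad a)_i ∘ (bad a)_i)(x) = ((q^{2i+1} - q^{-2i-1})/(q^{2i} - q^{-2i})) ((bad a)_i ∘ (bad a)_{i+1})(x). -/

import Mathlib

open Finset

variable {F : Type*} [Field F] {A : Type*} [Ring A] [Algebra F A]

/-- The quantum adjoint map `ad_r a : x ↦ q^r a x - q^{-r} x a`. -/
noncomputable def qad (q : F) (a : A) (r : ℤ) (x : A) : A :=
  q ^ r • (a * x) - q ^ (-r) • (x * a)

/-- `bad_m a` : the balanced version of `ad`. -/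
noncomputable def bad (q : F) (a : A) : ℕ → A → A
  | 0, x => (q - q⁻¹)⁻¹ • qad q a 0 x
  | (m + 1), x =>
      (((q ^ (2 * (m + 1) : ℤ) - q ^ (-(2 * (m + 1)) : ℤ)) *
          (q ^ (2 * (m + 1) + 1 : ℤ) - q ^ (-(2 * (m + 1)) - 1 : ℤ)))⁻¹) •
        ((q ^ (2 * (m + 1) : ℤ) - q ^ (-(2 * (m + 1)) : ℤ)) ^ 2 • x +
          qad q a ((m : ℤ) + 1) (qad q a (-((m : ℤ) + 1)) x))

/-- `(bad a)_m = bad_{m-1} a ∘ ⋯ ∘ bad_0 a`, with `(bad a)_0 = id`. -/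
noncomputable def badProd (q : F) (a : A) : ℕ → A → A
  | 0 => id
  | (m + 1) => bad q a m ∘ badProd q a m

/-- `S_m = (bad a)_m ∘ (ad_m a) / (q^{2m} - q^{-2m})`, with `S_0 = id`. -/
noncomputable def Smap (q : F) (a : A) : ℕ → A → A
  | 0 => id
  | (m + 1) => fun x =>
      (q ^ (2 * (m + 1) : ℤ) - q ^ (-(2 * (m + 1)) : ℤ))⁻¹ •
        badProd q a (m + 1) (qad q a ((m : ℤ) + 1) x)

/-- `S'_m = (bad a)_m ∘ (ad_{-m} a) / (q^{2m} - q^{-2m})`, with `S'_0 = id`. -/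
noncomputable def Smap' (q : F) (a : A) : ℕ → A → A
  | 0 => id
  | (m + 1) => fun x =>
      (q ^ (2 * (m + 1) : ℤ) - q ^ (-(2 * (m + 1)) : ℤ))⁻¹ •
        badProd q a (m + 1) (qad q a (-((m : ℤ) + 1)) x)

lemma qad_smul (q : F) (a : A) (r : ℤ) (c : F) (x : A) :
    qad q a r (c • x) = c • qad q a r x := by
  simp [qad, smul_sub, mul_smul_comm, smul_mul_assoc, smul_smul, mul_comm]

lemma qad_add (q : F) (a : A) (r : ℤ) (x y : A) :
    qad q a r (x + y) = qad q a r x + qad q a r y := by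
  simp [qad, mul_add, add_mul, smul_add]; abel

lemma qad_comm (q : F) (a : A) (r s : ℤ) (x : A) :
    qad q a r (qad q a s x) = qad q a s (qad q a r x) := by
  simp only [qad, mul_sub, sub_mul, smul_sub, smul_mul_assoc, mul_smul_comm, smul_smul,
    mul_assoc]
  rw [mul_comm (q ^ r) (q ^ s), mul_comm (q ^ r) (q ^ (-s)), mul_comm (q ^ (-r)) (q ^ s),
    mul_comm (q ^ (-r)) (q ^ (-s))]
  abel

lemma bad_smul (q : F) (a : A) (m : ℕ) (c : F) (x : A) :
    bad q a m (c • x) = c • bad q a m x := by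
  cases m with
  | zero => simp [bad, qad_smul, smul_smul, mul_comm]
  | succ m =>
      simp only [bad, qad_smul, smul_add, smul_smul]
      module

lemma bad_add (q : F) (a : A) (m : ℕ) (x y : A) :
    bad q a m (x + y) = bad q a m x + bad q a m y := by
  cases m with
  | zero => simp [bad, qad_add, smul_add]
  | succ m =>
      rw [bad, bad, bad]
      simp only [qad_add, smul_add]
      abel

lemma bad_qad (q : F) (a : A) (m : ℕ) (r : ℤ) (x : A) :
    bad q a m (qad q a r x) = qad q a r (bad q a m x) := by
  cases m with
  | zero => rw [bad, bad, qad_smul, qad_comm]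
  | succ m =>
      rw [bad, bad, qad_smul, qad_add, qad_smul, qad_comm q a r, qad_comm q a r]

lemma badProd_smul (q : F) (a : A) (m : ℕ) (c : F) (x : A) :
    badProd q a m (c • x) = c • badProd q a m x := by
  induction m with
  | zero => rfl
  | succ m ih => simp only [badProd, Function.comp_apply, ih, bad_smul]

lemma badProd_add (q : F) (a : A) (m : ℕ) (x y : A) :
    badProd q a m (x + y) = badProd q a m x + badProd q a m y := by
  induction m with
  | zero => rfl
  | succ m ih => simp only [badProd, Function.comp_apply, ih, bad_add]

lemma badProd_qad (q : F) (a : A) (m : ℕ) (r : ℤ) (x : A) :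
    badProd q a m (qad q a r x) = qad q a r (badProd q a m x) := by
  induction m with
  | zero => rfl
  | succ m ih => simp only [badProd, Function.comp_apply, ih, bad_qad]

theorem stmt6 (q : F) (hq : q ≠ 0) (hroot : ∀ n : ℕ, 0 < n → q ^ n ≠ 1) (a : A) (i : ℕ) (hi : 0 < i) (x : A) :
    Smap q a i (Smap' q a i x) + badProd q a i (badProd q a i x) =
      ((q ^ (2 * (i : ℤ) + 1) - q ^ (-(2 * (i : ℤ)) - 1)) / (q ^ (2 * (i : ℤ)) - q ^ (-(2 * (i : ℤ))))) •
        badProd q a i (badProd q a (i + 1) x) := by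
  obtain ⟨m, rfl⟩ : ∃ m, i = m + 1 := ⟨i - 1, (Nat.succ_pred_eq_of_pos hi).symm⟩
  set c : F := q ^ (2 * ((m : ℤ) + 1)) - q ^ (-(2 * ((m : ℤ) + 1))) with hc
  set d : F := q ^ (2 * ((m : ℤ) + 1) + 1) - q ^ (-(2 * ((m : ℤ) + 1)) - 1) with hd
  have hqz : ∀ k : ℤ, q ^ k ≠ 0 := fun k => zpow_ne_zero k hq
  have hne : ∀ r s : ℤ, r < s → q ^ r - q ^ s ≠ 0 := by
    intro r s hrs h
    have h1 : q ^ r = q ^ s := sub_eq_zero.mp h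
    have h2 : q ^ (s - r) = 1 := by
      rw [zpow_sub₀ hq, ← h1, div_self (hqz r)]
    have h3 : (0 : ℤ) < s - r := by omega
    have hn : ((s - r).toNat : ℤ) = s - r := Int.toNat_of_nonneg h3.le
    exact hroot (s - r).toNat (by omega) (by rw [← zpow_natCast, hn, h2])
  have hcne : c ≠ 0 := by
    have := hne (-(2 * ((m : ℤ) + 1))) (2 * ((m : ℤ) + 1)) (by omega)
    intro h; apply this; rw [← neg_eq_zero] at h; rw [← h]; ring
  have hdne : d ≠ 0 := by
    have := hne (-(2 * ((m : ℤ) + 1)) - 1) (2 * ((m : ℤ) + 1) + 1) (by omega)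
    intro h; apply this; rw [← neg_eq_zero] at h; rw [← h]; ring
  have hcast : ((m : ℤ) + 1) = ((m + 1 : ℕ) : ℤ) := by push_cast; ring
  have key : Smap q a (m + 1) (Smap' q a (m + 1) x)
      = (c⁻¹ * c⁻¹) • badProd q a (m + 1) (qad q a ((m : ℤ) + 1)
          (qad q a (-((m : ℤ) + 1)) (badProd q a (m + 1) x))) := by
    rw [Smap, Smap']
    simp only [qad_smul, badProd_smul, smul_smul, badProd_qad]
    rfl
  have hbadsucc : badProd q a (m + 1 + 1) x = (c * d)⁻¹ •
      (c ^ 2 • badProd q a (m + 1) x +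
        qad q a ((m : ℤ) + 1) (qad q a (-((m : ℤ) + 1)) (badProd q a (m + 1) x))) := by
    show bad q a (m + 1) (badProd q a (m + 1) x) = _
    rw [bad, ← hc, ← hd]
  rw [key, hbadsucc, badProd_smul, badProd_add, badProd_smul, badProd_qad, badProd_qad]
  have h2i : (2 * ((m + 1 : ℕ) : ℤ)) = 2 * ((m : ℤ) + 1) := by push_cast; ring
  have hfrac : (q ^ (2 * ((m + 1 : ℕ) : ℤ) + 1) - q ^ (-(2 * ((m + 1 : ℕ) : ℤ)) - 1)) /
      (q ^ (2 * ((m + 1 : ℕ) : ℤ)) - q ^ (-(2 * ((m + 1 : ℕ) : ℤ)))) = d / c := by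
    rw [h2i]
  have e1 : d / c * ((c * d)⁻¹ * c ^ 2) = 1 := by field_simp
  have e2 : d / c * (c * d)⁻¹ = c⁻¹ * c⁻¹ := by field_simp
  rw [hfrac]
  simp only [smul_add, smul_smul]
  rw [e1, e2, one_smul, add_comm]
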